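/- Let f : ℝ² → ℝ be given by f(x₁,x₂) = a₁·cos(x₁+η₁) + a₂·cos(x₂+η₂) with a₁ > a₂ > 0 and η₁,η₂ ∈ ℝ. Then the zero set of f has no compact connected components; i.e., every connected component of f⁻¹({0}) is unbounded. -/

import Mathlib

open Real

/-- The deterministic Cilleruelo-type function
`f(x₁,x₂) = a₁·cos(x₁+η₁) + a₂·cos(x₂+η₂)` with `a₁ > a₂ > 0` has no compact
(bounded) nodal components: every connected component of its zero set is unbounded. -/
theorem cilleruelo_no_compact_nodal_components
    (a₁ a₂ η₁ η₂ : ℝ) (h₁ : a₁ > a₂) (h₂ : a₂ > 0)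
    (f : ℝ × ℝ → ℝ)
    (hf : ∀ x : ℝ × ℝ, f x = a₁ * Real.cos (x.1 + η₁) + a₂ * Real.cos (x.2 + η₂)) :
    ∀ p ∈ f ⁻¹' {0}, ¬ Bornology.IsBounded (connectedComponentIn (f ⁻¹' {0}) p) := by
  intro p hp hb
  have ha₁ : (0:ℝ) < a₁ := h₂.trans h₁
  set c : ℝ → ℝ := fun t => -(a₂ / a₁) * Real.cos (t + η₂) with hcdef
  have hc1 : ∀ t, -1 ≤ c t := by
    intro t
    have h' : |c t| ≤ a₂ / a₁ := by
      rw [abs_mul, abs_neg, abs_of_pos (div_pos h₂ ha₁)]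
      calc a₂/a₁ * |Real.cos (t+η₂)| ≤ a₂/a₁ * 1 := by
            exact mul_le_mul_of_nonneg_left (Real.abs_cos_le_one _) (le_of_lt (div_pos h₂ ha₁))
        _ = a₂/a₁ := mul_one _
    have := (abs_le.mp h').1
    have hlt : a₂ / a₁ ≤ 1 := by
      rw [div_le_one ha₁]; exact h₁.le
    linarith
  have hc2 : ∀ t, c t ≤ 1 := by
    intro t
    have h' : |c t| ≤ a₂ / a₁ := by
      rw [abs_mul, abs_neg, abs_of_pos (div_pos h₂ ha₁)]
      calc a₂/a₁ * |Real.cos (t+η₂)| ≤ a₂/a₁ * 1 := by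
            exact mul_le_mul_of_nonneg_left (Real.abs_cos_le_one _) (le_of_lt (div_pos h₂ ha₁))
        _ = a₂/a₁ := mul_one _
    have := (abs_le.mp h').2
    have hlt : a₂ / a₁ ≤ 1 := by
      rw [div_le_one ha₁]; exact h₁.le
    linarith
  set θ : ℝ → ℝ := fun t => Real.arccos (c t) with hθdef
  have hcosθ : ∀ t, Real.cos (θ t) = c t := fun t => Real.cos_arccos (hc1 t) (hc2 t)
  -- key: point p satisfies cos (p.1 + η₁) = c p.2
  have hp0 : f p = 0 := hp
  rw [hf p] at hp0
  have hkey : Real.cos (θ p.2) = Real.cos (p.1 + η₁) := by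
    rw [hcosθ]
    simp only [hcdef]
    have e : a₁ * (a₂ / a₁) = a₂ := by field_simp
    apply mul_left_cancel₀ ha₁.ne'
    linear_combination (-Real.cos (p.2 + η₂)) * e - hp0
  obtain ⟨k, hk⟩ := Real.cos_eq_cos_iff.mp hkey
  -- unify the two cases: p.1 + η₁ = 2kπ + s * θ p.2 with s = ±1
  obtain ⟨s, hs, hks⟩ : ∃ s : ℝ, (s = 1 ∨ s = -1) ∧ p.1 + η₁ = 2 * k * π + s * θ p.2 := by
    rcases hk with h | h
    · exact ⟨1, Or.inl rfl, by linarith⟩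
    · exact ⟨-1, Or.inr rfl, by linarith⟩
  set g : ℝ → ℝ := fun t => 2 * k * π + s * θ t - η₁ with hgdef
  have hgp : g p.2 = p.1 := by simp only [hgdef]; linarith
  have hgz : ∀ t, f (g t, t) = 0 := by
    intro t
    rw [hf]
    have : Real.cos (g t + η₁) = c t := by
      have h1 : g t + η₁ = 2 * k * π + s * θ t := by simp only [hgdef]; ring
      rw [h1]
      have h2 : Real.cos (2 * k * π + s * θ t) = Real.cos (s * θ t) := by
        have := Real.cos_add_int_mul_two_pi (s * θ t) k
        calc Real.cos (2 * k * π + s * θ t) = Real.cos (s * θ t + ↑k * (2 * π)) := by ring_nf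
          _ = Real.cos (s * θ t) := this
      rw [h2]
      rcases hs with rfl | rfl
      · rw [one_mul, hcosθ]
      · rw [neg_one_mul, Real.cos_neg, hcosθ]
    rw [this]
    simp only [hcdef]
    field_simp
    ring
  have hgcont : Continuous g := by
    apply Continuous.sub _ continuous_const
    apply Continuous.add continuous_const
    apply Continuous.mul continuous_const
    have hccont : Continuous c := by
      rw [hcdef]
      exact continuous_const.mul (Real.continuous_cos.comp (continuous_id.add continuous_const))
    exact Real.continuous_arccos.comp hccont
  set S : Set (ℝ × ℝ) := Set.range (fun t => (g t, t)) with hSdef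
  have hScont : Continuous (fun t => (g t, t)) := hgcont.prodMk continuous_id
  have hSconn : IsPreconnected S := by
    rw [hSdef, ← Set.image_univ]
    exact isPreconnected_univ.image _ hScont.continuousOn
  have hpS : p ∈ S := ⟨p.2, by show (g p.2, p.2) = p; rw [Prod.ext_iff]; exact ⟨hgp, rfl⟩⟩
  have hSsub : S ⊆ f ⁻¹' {0} := by
    rintro x ⟨t, rfl⟩
    exact hgz t
  have hSC : S ⊆ connectedComponentIn (f ⁻¹' {0}) p :=
    hSconn.subset_connectedComponentIn hpS hSsub
  have hSB : Bornology.IsBounded S := hb.subset hSC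
  obtain ⟨C, hC⟩ := Metric.isBounded_iff.mp hSB
  have h1 : ((g (p.2 + |C| + 1), p.2 + |C| + 1) : ℝ × ℝ) ∈ S := ⟨_, rfl⟩
  have h2 : ((g p.2, p.2) : ℝ × ℝ) ∈ S := ⟨_, rfl⟩
  have := hC h1 h2
  rw [Prod.dist_eq] at this
  have hd : dist (p.2 + |C| + 1) p.2 ≤ C := le_trans (le_max_right _ _) this
  rw [Real.dist_eq] at hd
  have : |C| ≥ C := le_abs_self C
  have habs : |p.2 + |C| + 1 - p.2| = |C| + 1 := by
    rw [show p.2 + |C| + 1 - p.2 = |C| + 1 by ring]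
    exact abs_of_pos (by positivity)
  linarith [habs ▸ hd]
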